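/- Let Δ : D_q → D_q ⊗_k D_q be any k-algebra homomorphism satisfying Δ(E) = E⊗1 + K⊗E, Δ(F) = F⊗K̃⁻¹ + 1⊗F, Δ(K^{±1}) = K^{±1}⊗K^{±1} and Δ(K̃^{±1}) = K̃^{±1}⊗K̃^{±1}. Then for every t ∈ ℕ, Δ([K,K̃;t]) = Σ_{a=0}^{t} [K,K̃;t−a]·K̃^{−a} ⊗ K^{t−a}·[K,K̃;a]. -/
import Mathlib


noncomputable section

/-- Generators of the quantum double `D_q`. -/
inductive DGen : Type
  | E | F | K | Kinv | Kt | Ktinv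
  deriving DecidableEq

/-- The defining relations of `D_q`. -/
inductive DRel (k : Type) [Field k] (q : k) :
    FreeAlgebra k DGen → FreeAlgebra k DGen → Prop
  | KE : DRel k q (FreeAlgebra.ι k DGen.K * FreeAlgebra.ι k DGen.E)
      ((q ^ 2) • (FreeAlgebra.ι k DGen.E * FreeAlgebra.ι k DGen.K))
  | KF : DRel k q (FreeAlgebra.ι k DGen.K * FreeAlgebra.ι k DGen.F)
      (((q ^ 2)⁻¹) • (FreeAlgebra.ι k DGen.F * FreeAlgebra.ι k DGen.K))
  | KtE : DRel k q (FreeAlgebra.ι k DGen.Kt * FreeAlgebra.ι k DGen.E)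
      ((q ^ 2) • (FreeAlgebra.ι k DGen.E * FreeAlgebra.ι k DGen.Kt))
  | KtF : DRel k q (FreeAlgebra.ι k DGen.Kt * FreeAlgebra.ι k DGen.F)
      (((q ^ 2)⁻¹) • (FreeAlgebra.ι k DGen.F * FreeAlgebra.ι k DGen.Kt))
  | KKinv : DRel k q (FreeAlgebra.ι k DGen.K * FreeAlgebra.ι k DGen.Kinv) 1
  | KinvK : DRel k q (FreeAlgebra.ι k DGen.Kinv * FreeAlgebra.ι k DGen.K) 1
  | KtKtinv : DRel k q (FreeAlgebra.ι k DGen.Kt * FreeAlgebra.ι k DGen.Ktinv) 1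
  | KtinvKt : DRel k q (FreeAlgebra.ι k DGen.Ktinv * FreeAlgebra.ι k DGen.Kt) 1
  | KKt : DRel k q (FreeAlgebra.ι k DGen.K * FreeAlgebra.ι k DGen.Kt)
      (FreeAlgebra.ι k DGen.Kt * FreeAlgebra.ι k DGen.K)
  | EF : DRel k q (FreeAlgebra.ι k DGen.E * FreeAlgebra.ι k DGen.F)
      (FreeAlgebra.ι k DGen.F * FreeAlgebra.ι k DGen.E +
        ((q - q⁻¹)⁻¹) • (FreeAlgebra.ι k DGen.K - FreeAlgebra.ι k DGen.Ktinv))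

/-- The quantum double `D_q` of `U_q(sl2)^{≤0}`, presented by generators and relations. -/
abbrev Dq (k : Type) [Field k] (q : k) := RingQuot (DRel k q)

def DE (k : Type) [Field k] (q : k) : Dq k q :=
  RingQuot.mkAlgHom k (DRel k q) (FreeAlgebra.ι k DGen.E)
def DF (k : Type) [Field k] (q : k) : Dq k q :=
  RingQuot.mkAlgHom k (DRel k q) (FreeAlgebra.ι k DGen.F)
def DK (k : Type) [Field k] (q : k) : Dq k q :=
  RingQuot.mkAlgHom k (DRel k q) (FreeAlgebra.ι k DGen.K)
def DKinv (k : Type) [Field k] (q : k) : Dq k q :=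
  RingQuot.mkAlgHom k (DRel k q) (FreeAlgebra.ι k DGen.Kinv)
def DKt (k : Type) [Field k] (q : k) : Dq k q :=
  RingQuot.mkAlgHom k (DRel k q) (FreeAlgebra.ι k DGen.Kt)
def DKtinv (k : Type) [Field k] (q : k) : Dq k q :=
  RingQuot.mkAlgHom k (DRel k q) (FreeAlgebra.ι k DGen.Ktinv)

/-- The quantum integer `[n]_q = (qⁿ - q⁻ⁿ)/(q - q⁻¹)`. -/
def qint (k : Type) [Field k] (q : k) (n : ℕ) : k := (q ^ n - q⁻¹ ^ n) / (q - q⁻¹)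

/-- The quantum factorial `[n]_q!`. -/
def qfact (k : Type) [Field k] (q : k) : ℕ → k
  | 0 => 1
  | n + 1 => qfact k q n * qint k q (n + 1)

/-- The Gaussian binomial coefficient `[m choose n]_q`. -/
def qbinom (k : Type) [Field k] (q : k) (m n : ℕ) : k :=
  qfact k q m / (qfact k q n * qfact k q (m - n))

/-- The element `[K,K̃;c;t] = ∏_{s=1}^t (K q^{c-s+1} - K̃⁻¹ q^{-c+s-1})/(q^s - q^{-s})` of `D_q`. -/
def KKtc (k : Type) [Field k] (q : k) (c : ℤ) : ℕ → Dq k q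
  | 0 => 1
  | t + 1 =>
      KKtc k q c t *
        ((q ^ ((t : ℤ) + 1) - q ^ (-((t : ℤ) + 1)))⁻¹ •
          (q ^ (c - (t : ℤ)) • DK k q - q ^ ((t : ℤ) - c) • DKtinv k q))

open scoped TensorProduct


section Aux

variable (k : Type) [Field k] (q : k)

lemma Dq_K_Kt_comm : DK k q * DKt k q = DKt k q * DK k q := by
  unfold DK DKt
  rw [← map_mul, ← map_mul]
  exact RingQuot.mkAlgHom_rel k DRel.KKt

lemma Dq_Kt_Ktinv : DKt k q * DKtinv k q = 1 := by
  unfold DKt DKtinv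
  rw [← map_mul, RingQuot.mkAlgHom_rel k DRel.KtKtinv, map_one]

lemma Dq_Ktinv_Kt : DKtinv k q * DKt k q = 1 := by
  unfold DKt DKtinv
  rw [← map_mul, RingQuot.mkAlgHom_rel k DRel.KtinvKt, map_one]

lemma K_Ktinv_comm : Commute (DK k q) (DKtinv k q) := by
  unfold Commute SemiconjBy
  calc DK k q * DKtinv k q
      = (DKtinv k q * DKt k q) * (DK k q * DKtinv k q) := by
        rw [Dq_Ktinv_Kt, one_mul]
    _ = DKtinv k q * ((DKt k q * DK k q) * DKtinv k q) := by
        simp only [mul_assoc]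
    _ = DKtinv k q * ((DK k q * DKt k q) * DKtinv k q) := by rw [Dq_K_Kt_comm]
    _ = DKtinv k q * (DK k q * (DKt k q * DKtinv k q)) := by simp only [mul_assoc]
    _ = DKtinv k q * DK k q := by rw [Dq_Kt_Ktinv, mul_one]

lemma K_comm_KKtc (a : ℕ) : Commute (DK k q) (KKtc k q 0 a) := by
  induction a with
  | zero => exact Commute.one_right _
  | succ n ih =>
    rw [KKtc]
    exact ih.mul_right
      ((((Commute.refl (DK k q)).smul_right _).sub_right
        ((K_Ktinv_comm k q).smul_right _)).smul_right _)

lemma Dne (hq0 : q ≠ 0) (hq : ∀ n : ℕ, 0 < n → q ^ n ≠ 1) (n : ℕ) :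
    q ^ ((n : ℤ) + 1) - q ^ (-((n : ℤ) + 1)) ≠ 0 := by
  intro h
  have he : q ^ ((n : ℤ) + 1) = q ^ (-((n : ℤ) + 1)) := sub_eq_zero.mp h
  have h2 : q ^ (2 * n + 2) = 1 := by
    have : q ^ ((2 * n + 2 : ℕ) : ℤ) = 1 := by
      rw [show ((2 * n + 2 : ℕ) : ℤ) = ((n : ℤ) + 1) + ((n : ℤ) + 1) by push_cast; ring,
        zpow_add₀ hq0]
      nth_rewrite 2 [he]
      rw [← zpow_add₀ hq0, show ((n:ℤ) + 1) + (-((n:ℤ) + 1)) = 0 by ring, zpow_zero]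
    rwa [zpow_natCast] at this
  exact hq (2 * n + 2) (by omega) h2

set_option maxHeartbeats 1000000 in
lemma Tmul_sub (x y z : Dq k q ⊗[k] Dq k q) : x * (y - z) = x * y - x * z :=
  mul_sub x y z

lemma key (hq0 : q ≠ 0) (s a : ℕ)
    (hs : q ^ ((s : ℤ) + 1) - q ^ (-((s : ℤ) + 1)) ≠ 0)
    (ha : q ^ ((a : ℤ) + 1) - q ^ (-((a : ℤ) + 1)) ≠ 0) :
    ((KKtc k q 0 s * DKtinv k q ^ a) ⊗ₜ[k] (DK k q ^ s * KKtc k q 0 a)) *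
      ((q ^ (-(s : ℤ)) * q ^ (-(a : ℤ))) • (DK k q ⊗ₜ[k] DK k q) -
        (q ^ ((s : ℤ)) * q ^ ((a : ℤ))) • (DKtinv k q ⊗ₜ[k] DKtinv k q)) =
    (q ^ (-(a : ℤ)) * (q ^ ((s : ℤ) + 1) - q ^ (-((s : ℤ) + 1)))) •
      ((KKtc k q 0 (s + 1) * DKtinv k q ^ a) ⊗ₜ[k] (DK k q ^ (s + 1) * KKtc k q 0 a)) +
    (q ^ ((s : ℤ)) * (q ^ ((a : ℤ) + 1) - q ^ (-((a : ℤ) + 1)))) •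
      ((KKtc k q 0 s * DKtinv k q ^ (a + 1)) ⊗ₜ[k] (DK k q ^ s * KKtc k q 0 (a + 1))) := by
  have hc1 : DKtinv k q ^ a * DK k q = DK k q * DKtinv k q ^ a :=
    (((K_Ktinv_comm k q).pow_right a).eq).symm
  have hc2 : KKtc k q 0 a * DK k q = DK k q * KKtc k q 0 a :=
    ((K_comm_KKtc k q a).eq).symm
  have hc3 : DKtinv k q * DKtinv k q ^ a = DKtinv k q ^ a * DKtinv k q := by
    rw [← pow_succ, ← pow_succ']
  simp only [KKtc, pow_succ]
  simp only [mul_smul_comm, smul_mul_assoc, ← TensorProduct.smul_tmul',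
    TensorProduct.tmul_smul, smul_smul]
  rw [mul_assoc (q ^ (-(a : ℤ))), mul_inv_cancel₀ hs, mul_one,
    mul_assoc (q ^ ((s : ℤ))) (q ^ ((a : ℤ) + 1) - q ^ (-((a : ℤ) + 1))),
    mul_inv_cancel₀ ha, mul_one]
  simp only [Tmul_sub, mul_sub, sub_mul, smul_mul_assoc, mul_smul_comm, smul_sub, smul_smul,
    Algebra.TensorProduct.tmul_mul_tmul, ← TensorProduct.smul_tmul',
    TensorProduct.tmul_smul, TensorProduct.sub_tmul, TensorProduct.tmul_sub]
  simp only [smul_smul, smul_sub, mul_assoc]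
  simp only [hc1, hc2, hc3]
  match_scalars <;> ring

end Aux

/-- if `Δ : D_q → D_q ⊗ D_q` is an algebra map with the comultiplication
values on the generators, then
`Δ([K,K̃;t]) = Σ_{a=0}^{t} ([K,K̃;t−a]·K̃^{−a}) ⊗ (K^{t−a}·[K,K̃;a])`. -/
theorem comul_KKtc (k : Type) [Field k] (q : k)
    (hq0 : q ≠ 0) (hq : ∀ n : ℕ, 0 < n → q ^ n ≠ 1)
    (Δ : Dq k q →ₐ[k] (Dq k q ⊗[k] Dq k q))
    (hE : Δ (DE k q) = DE k q ⊗ₜ[k] 1 + DK k q ⊗ₜ[k] DE k q)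
    (hF : Δ (DF k q) = DF k q ⊗ₜ[k] DKtinv k q + 1 ⊗ₜ[k] DF k q)
    (hK : Δ (DK k q) = DK k q ⊗ₜ[k] DK k q)
    (hKinv : Δ (DKinv k q) = DKinv k q ⊗ₜ[k] DKinv k q)
    (hKt : Δ (DKt k q) = DKt k q ⊗ₜ[k] DKt k q)
    (hKtinv : Δ (DKtinv k q) = DKtinv k q ⊗ₜ[k] DKtinv k q)
    (t : ℕ) :
    Δ (KKtc k q 0 t) =
      ∑ a ∈ Finset.range (t + 1),
        (KKtc k q 0 (t - a) * DKtinv k q ^ a) ⊗ₜ[k]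
          (DK k q ^ (t - a) * KKtc k q 0 a) := by
  induction t with
  | zero =>
    simp [KKtc, Algebra.TensorProduct.one_def]
  | succ t ih =>
    have hD := Dne k q hq0 hq t
    rw [KKtc, map_mul, ih, map_smul, map_sub, map_smul, map_smul, hK, hKtinv,
      mul_smul_comm, Finset.sum_mul]
    have step1 : ∀ a ∈ Finset.range (t + 1),
        ((KKtc k q 0 (t - a) * DKtinv k q ^ a) ⊗ₜ[k] (DK k q ^ (t - a) * KKtc k q 0 a)) *
          (q ^ ((0 : ℤ) - (t : ℤ)) • (DK k q ⊗ₜ[k] DK k q) -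
            q ^ ((t : ℤ) - 0) • (DKtinv k q ⊗ₜ[k] DKtinv k q)) =
        (q ^ (-(a : ℤ)) * (q ^ ((t : ℤ) + 1 - a) - q ^ ((a : ℤ) - t - 1))) •
          ((KKtc k q 0 (t + 1 - a) * DKtinv k q ^ a) ⊗ₜ[k]
            (DK k q ^ (t + 1 - a) * KKtc k q 0 a)) +
        (q ^ ((t : ℤ) - a) * (q ^ ((a : ℤ) + 1) - q ^ (-((a : ℤ) + 1)))) •
          ((KKtc k q 0 (t + 1 - (a + 1)) * DKtinv k q ^ (a + 1)) ⊗ₜ[k]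
            (DK k q ^ (t + 1 - (a + 1)) * KKtc k q 0 (a + 1))) := by
      intro a ha
      have hat : a ≤ t := by
        have := Finset.mem_range.mp ha; omega
      have h1 : t + 1 - a = (t - a) + 1 := by omega
      have h2 : t + 1 - (a + 1) = t - a := by omega
      rw [h1, h2,
        show q ^ ((0 : ℤ) - (t : ℤ)) = q ^ (-((t - a : ℕ) : ℤ)) * q ^ (-(a : ℤ)) by
          rw [← zpow_add₀ hq0]; congr 1; omega,
        show q ^ ((t : ℤ) - 0) = q ^ (((t - a : ℕ) : ℤ)) * q ^ ((a : ℤ)) by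
          rw [← zpow_add₀ hq0]; congr 1; omega,
        key k q hq0 (t - a) a (Dne k q hq0 hq (t - a)) (Dne k q hq0 hq a)]
      congr 2
      · congr 2
        · congr 1; omega
        · congr 1; omega
      · congr 2
        congr 1; omega
    rw [Finset.sum_congr rfl step1, Finset.sum_add_distrib, smul_add,
      Finset.smul_sum, Finset.smul_sum]
    simp only [smul_smul]
    have hfirst :
        ∑ a ∈ Finset.range (t + 1),
          ((q ^ ((t : ℤ) + 1) - q ^ (-((t : ℤ) + 1)))⁻¹ *
            (q ^ (-(a : ℤ)) * (q ^ ((t : ℤ) + 1 - a) - q ^ ((a : ℤ) - t - 1)))) •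
            ((KKtc k q 0 (t + 1 - a) * DKtinv k q ^ a) ⊗ₜ[k]
              (DK k q ^ (t + 1 - a) * KKtc k q 0 a)) =
        ∑ a ∈ Finset.range (t + 2),
          ((q ^ ((t : ℤ) + 1) - q ^ (-((t : ℤ) + 1)))⁻¹ *
            (q ^ (-(a : ℤ)) * (q ^ ((t : ℤ) + 1 - a) - q ^ ((a : ℤ) - t - 1)))) •
            ((KKtc k q 0 (t + 1 - a) * DKtinv k q ^ a) ⊗ₜ[k]
              (DK k q ^ (t + 1 - a) * KKtc k q 0 a)) := by
      rw [Finset.sum_range_succ _ (t + 1),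
        show q ^ ((t : ℤ) + 1 - ((t + 1 : ℕ) : ℤ)) - q ^ (((t + 1 : ℕ) : ℤ) - t - 1) = 0 by
          rw [show (t : ℤ) + 1 - ((t + 1 : ℕ) : ℤ) = 0 by push_cast; ring,
            show ((t + 1 : ℕ) : ℤ) - (t : ℤ) - 1 = 0 by push_cast; ring, sub_self]]
      rw [mul_zero, mul_zero, zero_smul, add_zero]
    have hsecond :
        ∑ a ∈ Finset.range (t + 1),
          ((q ^ ((t : ℤ) + 1) - q ^ (-((t : ℤ) + 1)))⁻¹ *
            (q ^ ((t : ℤ) - a) * (q ^ ((a : ℤ) + 1) - q ^ (-((a : ℤ) + 1))))) •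
            ((KKtc k q 0 (t + 1 - (a + 1)) * DKtinv k q ^ (a + 1)) ⊗ₜ[k]
              (DK k q ^ (t + 1 - (a + 1)) * KKtc k q 0 (a + 1))) =
        ∑ b ∈ Finset.range (t + 2),
          ((q ^ ((t : ℤ) + 1) - q ^ (-((t : ℤ) + 1)))⁻¹ *
            (q ^ ((t : ℤ) + 1 - b) * (q ^ ((b : ℤ)) - q ^ (-(b : ℤ))))) •
            ((KKtc k q 0 (t + 1 - b) * DKtinv k q ^ b) ⊗ₜ[k]
              (DK k q ^ (t + 1 - b) * KKtc k q 0 b)) := by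
      rw [Finset.sum_range_succ' _ (t + 1)]
      rw [show q ^ (((0 : ℕ) : ℤ)) - q ^ (-((0 : ℕ) : ℤ)) = 0 by norm_num]
      rw [mul_zero, mul_zero, zero_smul, add_zero]
      refine Finset.sum_congr rfl fun a _ => ?_
      congr 1
      push_cast
      ring
    rw [hfirst, hsecond, ← Finset.sum_add_distrib]
    refine Finset.sum_congr rfl fun b _ => ?_
    rw [← add_smul]
    have hcoef :
        (q ^ ((t : ℤ) + 1) - q ^ (-((t : ℤ) + 1)))⁻¹ *
            (q ^ (-(b : ℤ)) * (q ^ ((t : ℤ) + 1 - b) - q ^ ((b : ℤ) - t - 1))) +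
          (q ^ ((t : ℤ) + 1) - q ^ (-((t : ℤ) + 1)))⁻¹ *
            (q ^ ((t : ℤ) + 1 - b) * (q ^ ((b : ℤ)) - q ^ (-(b : ℤ)))) = 1 := by
      rw [← mul_add, inv_mul_eq_one₀ hD, mul_sub, mul_sub,
        ← zpow_add₀ hq0, ← zpow_add₀ hq0, ← zpow_add₀ hq0, ← zpow_add₀ hq0,
        show (-(b : ℤ) + ((t : ℤ) + 1 - (b : ℤ))) = (t : ℤ) + 1 - 2 * (b : ℤ) by ring,
        show (-(b : ℤ) + ((b : ℤ) - (t : ℤ) - 1)) = -((t : ℤ) + 1) by ring,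
        show (((t : ℤ) + 1 - (b : ℤ)) + (b : ℤ)) = (t : ℤ) + 1 by ring,
        show (((t : ℤ) + 1 - (b : ℤ)) + -(b : ℤ)) = (t : ℤ) + 1 - 2 * (b : ℤ) by ring]
      ring
    rw [hcoef, one_smul]
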